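/- Let ι : GL₆(F₂) → Sym(V∖{0}) be the injective homomorphism given by the natural action of GL₆(F₂) on the 63 nonzero vectors of V = F₂⁶, and let P denote its image. Then the normalizer of P in the full symmetric group Sym(V∖{0}) equals P; that is, PSL₆(2) is self-normalizing in S₆₃. -/

import Mathlib

open Matrix

local notation "V" => (Fin 6 → ZMod 2)
local notation "GL6" => Matrix.GeneralLinearGroup (Fin 6) (ZMod 2)

lemma exists_gl_of_linearEquiv (e : V ≃ₗ[ZMod 2] V) :
    ∃ M : GL6, ∀ x : V, (M : Matrix (Fin 6) (Fin 6) (ZMod 2)).mulVec x = e x := by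
  refine ⟨Matrix.GeneralLinearGroup.toLin.symm
    (LinearMap.GeneralLinearGroup.ofLinearEquiv e), fun x => ?_⟩
  have h1 : ∀ (A : GL6) (x : V), (A : Matrix (Fin 6) (Fin 6) (ZMod 2)).mulVec x
      = ((Matrix.GeneralLinearGroup.toLin A : (V →ₗ[ZMod 2] V)) x) := by
    intro A x
    rw [Matrix.GeneralLinearGroup.coe_toLin]
    rfl
  rw [h1, MulEquiv.apply_symm_apply]
  rfl

lemma key_move (u v w : V) (hu : u ≠ 0) (hv : v ≠ 0) (huv : u ≠ v)
    (hw : w ∉ Submodule.span (ZMod 2) {u, v}) :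
    ∃ M : GL6, (M : Matrix (Fin 6) (Fin 6) (ZMod 2)).mulVec u = u ∧
      (M : Matrix (Fin 6) (Fin 6) (ZMod 2)).mulVec v = v ∧
      (M : Matrix (Fin 6) (Fin 6) (ZMod 2)).mulVec w ≠ w := by
  classical
  have hvu : v ∉ Submodule.span (ZMod 2) ({u} : Set V) := by
    rw [Submodule.mem_span_singleton]
    rintro ⟨c, rfl⟩
    rcases (by decide : ∀ c : ZMod 2, c = 0 ∨ c = 1) c with rfl | rfl
    · simp at hv
    · simp at huv
  have li2 : LinearIndepOn (ZMod 2) id ({v, u} : Set V) :=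
    ((linearIndepOn_singleton_iff (R := ZMod 2) (v := (id : V → V))).mpr hu).id_insert hvu
  have hspan_eq : Submodule.span (ZMod 2) ({v, u} : Set V)
      = Submodule.span (ZMod 2) ({u, v} : Set V) := by rw [Set.pair_comm]
  have hw' : w ∉ Submodule.span (ZMod 2) ({v, u} : Set V) := by rw [hspan_eq]; exact hw
  have li3 : LinearIndepOn (ZMod 2) id (insert w {v, u} : Set V) :=
    li2.id_insert hw'
  -- extend to a basis
  set s : Set V := insert w {v, u} with hs
  have hus : u ∈ s := by simp [hs]
  have hvs : v ∈ s := by simp [hs]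
  have hws : w ∈ s := by simp [hs]
  let B := Module.Basis.extend li3
  have hsub : s ⊆ li3.extend (Set.subset_univ s) := li3.subset_extend _
  let iu : li3.extend (Set.subset_univ s) := ⟨u, hsub hus⟩
  let iv : li3.extend (Set.subset_univ s) := ⟨v, hsub hvs⟩
  let iw : li3.extend (Set.subset_univ s) := ⟨w, hsub hws⟩
  have hwu : w ≠ u := fun h => hw (h ▸ Submodule.subset_span (by simp))
  have hwv : w ≠ v := fun h => hw (h ▸ Submodule.subset_span (by simp))
  have hBu : B iu = u := Module.Basis.extend_apply_self li3 iu
  have hBv : B iv = v := Module.Basis.extend_apply_self li3 iv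
  have hBw : B iw = w := Module.Basis.extend_apply_self li3 iw
  -- the linear map φ x = x + (coord at w of x) • u
  let φ : V →ₗ[ZMod 2] V := LinearMap.id + (B.coord iw).smulRight u
  have hφ : ∀ x, φ x = x + (B.repr x iw) • u := by
    intro x; simp [φ, Module.Basis.coord_apply]
  have hcu : B.repr u iw = 0 := by
    rw [← hBu, B.repr_self]
    rw [Finsupp.single_apply]
    simp only [ite_eq_right_iff]
    intro h
    exact absurd (congrArg Subtype.val h).symm hwu
  have hcv : B.repr v iw = 0 := by
    rw [← hBv, B.repr_self]
    rw [Finsupp.single_apply]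
    simp only [ite_eq_right_iff]
    intro h
    exact absurd (congrArg Subtype.val h).symm hwv
  have hcw : B.repr w iw = 1 := by
    rw [← hBw, B.repr_self]; simp
  have hinv : ∀ x, φ (φ x) = x := by
    intro x
    have h2 : B.repr ((B.repr x iw) • u) iw = 0 := by
      rw [_root_.map_smul]; simp [hcu]
    rw [hφ x, hφ _, map_add]
    simp only [Finsupp.coe_add, Pi.add_apply, h2, add_zero]
    rw [add_assoc, ← add_smul,
      (by decide : ∀ a : ZMod 2, a + a = 0) ((B.repr x) iw), zero_smul, add_zero]
  let e : V ≃ₗ[ZMod 2] V :=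
    LinearEquiv.ofLinear φ φ (LinearMap.ext hinv) (LinearMap.ext hinv)
  obtain ⟨M, hM⟩ := exists_gl_of_linearEquiv e
  refine ⟨M, ?_, ?_, ?_⟩
  · rw [hM]; show φ u = u; rw [hφ, hcu, zero_smul, add_zero]
  · rw [hM]; show φ v = v; rw [hφ, hcv, zero_smul, add_zero]
  · rw [hM]
    show φ w ≠ w
    rw [hφ, hcw, one_smul]
    intro h
    exact hu (by rwa [add_eq_left] at h)

/-- `PSL₆(2)` is self-normalizing in `S₆₃`: if `ι` is the (injective) homomorphism from
`GL₆(𝔽₂)` to the symmetric group on the 63 nonzero vectors of `𝔽₂⁶` given by the natural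
action, and `P` is its image, then the normalizer of `P` in the full symmetric group
equals `P`. -/
theorem GL6_F2_self_normalizing_in_S63
    (ι : Matrix.GeneralLinearGroup (Fin 6) (ZMod 2) →*
      Equiv.Perm {v : Fin 6 → ZMod 2 // v ≠ 0})
    (hinj : Function.Injective ι)
    (hι : ∀ (g : Matrix.GeneralLinearGroup (Fin 6) (ZMod 2))
      (v : {v : Fin 6 → ZMod 2 // v ≠ 0}),
      ((ι g v : {v : Fin 6 → ZMod 2 // v ≠ 0}) : Fin 6 → ZMod 2) =
        (g : Matrix (Fin 6) (Fin 6) (ZMod 2)).mulVec (v : Fin 6 → ZMod 2)) :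
    Subgroup.normalizer ι.range = ι.range := by
  classical
  refine le_antisymm ?_ Subgroup.le_normalizer
  intro σ hσ
  -- conjugation by σ⁻¹ preserves the range
  have hconj : ∀ h : Equiv.Perm {v : Fin 6 → ZMod 2 // v ≠ 0},
      h ∈ ι.range → σ⁻¹ * h * σ ∈ ι.range := by
    intro h hh
    have hσ' : σ⁻¹ ∈ Subgroup.normalizer ι.range := Subgroup.inv_mem _ hσ
    have := (Subgroup.mem_normalizer_iff.mp hσ' h).mp hh
    simpa using this
  -- additivity of σ on nonzero vectors
  have hadd : ∀ (x y : Fin 6 → ZMod 2) (hx : x ≠ 0) (hy : y ≠ 0), x ≠ y →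
      ∀ (hxy0 : x + y ≠ 0),
      ((σ ⟨x + y, hxy0⟩ : {v : Fin 6 → ZMod 2 // v ≠ 0}) : Fin 6 → ZMod 2) =
        ((σ ⟨x, hx⟩ : {v : Fin 6 → ZMod 2 // v ≠ 0}) : Fin 6 → ZMod 2) +
        ((σ ⟨y, hy⟩ : {v : Fin 6 → ZMod 2 // v ≠ 0}) : Fin 6 → ZMod 2) := by
    intro x y hx hy hxy hxy0
    set a := σ ⟨x, hx⟩ with ha
    set b := σ ⟨y, hy⟩ with hb
    set c := σ ⟨x + y, hxy0⟩ with hc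
    by_contra hne
    have hab : (a : Fin 6 → ZMod 2) ≠ (b : Fin 6 → ZMod 2) := by
      intro h
      exact hxy (congrArg Subtype.val (σ.injective (Subtype.ext h)))
    have hca : c ≠ a := by
      intro h
      have := congrArg Subtype.val (σ.injective h)
      simp only at this
      exact hy (by rwa [add_eq_left] at this)
    have hcb : c ≠ b := by
      intro h
      have := congrArg Subtype.val (σ.injective h)
      simp only at this
      exact hx (by rwa [add_eq_right] at this)
    have hcspan : (c : Fin 6 → ZMod 2) ∉
        Submodule.span (ZMod 2) {(a : Fin 6 → ZMod 2), (b : Fin 6 → ZMod 2)} := by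
      rw [Submodule.mem_span_pair]
      rintro ⟨p, q, hpq⟩
      rcases (by decide : ∀ t : ZMod 2, t = 0 ∨ t = 1) p with rfl | rfl <;>
        rcases (by decide : ∀ t : ZMod 2, t = 0 ∨ t = 1) q with rfl | rfl <;>
        simp only [zero_smul, one_smul, zero_add, add_zero] at hpq
      · exact c.2 hpq.symm
      · exact hcb (Subtype.ext hpq.symm)
      · exact hca (Subtype.ext hpq.symm)
      · exact hne hpq.symm
    obtain ⟨M, hMa, hMb, hMc⟩ := key_move (a : Fin 6 → ZMod 2) (b : Fin 6 → ZMod 2)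
      (c : Fin 6 → ZMod 2) a.2 b.2 hab hcspan
    obtain ⟨N, hN⟩ := hconj (ι M) ⟨M, rfl⟩
    -- ι N fixes ⟨x⟩ and ⟨y⟩
    have hfix : ∀ (z : Fin 6 → ZMod 2) (hz : z ≠ 0),
        (M : Matrix (Fin 6) (Fin 6) (ZMod 2)).mulVec ((σ ⟨z, hz⟩ : {v : Fin 6 → ZMod 2 // v ≠ 0}) : Fin 6 → ZMod 2) = ((σ ⟨z, hz⟩ : {v : Fin 6 → ZMod 2 // v ≠ 0}) : Fin 6 → ZMod 2) →
        (N : Matrix (Fin 6) (Fin 6) (ZMod 2)).mulVec z = z := by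
      intro z hz hfz
      have h1 : ι M (σ ⟨z, hz⟩) = σ ⟨z, hz⟩ := Subtype.ext (by rw [hι]; exact hfz)
      have h2 : ι N ⟨z, hz⟩ = ⟨z, hz⟩ := by
        rw [hN]
        show σ⁻¹ (ι M (σ ⟨z, hz⟩)) = ⟨z, hz⟩
        rw [h1]
        exact σ.symm_apply_apply _ -- might be Equiv.Perm.inv_apply_self
      have := congrArg Subtype.val h2
      rwa [hι] at this
    have hNx : (N : Matrix (Fin 6) (Fin 6) (ZMod 2)).mulVec x = x := hfix x hx hMa
    have hNy : (N : Matrix (Fin 6) (Fin 6) (ZMod 2)).mulVec y = y := hfix y hy hMb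
    have hNxy : (N : Matrix (Fin 6) (Fin 6) (ZMod 2)).mulVec (x + y) = x + y := by
      rw [Matrix.mulVec_add, hNx, hNy]
    -- hence ι M fixes c, contradiction
    have h3 : ι N ⟨x + y, hxy0⟩ = ⟨x + y, hxy0⟩ := Subtype.ext (by rw [hι]; exact hNxy)
    have h4 : ι M c = c := by
      have := congrArg σ (by rw [hN] at h3; exact h3 :
        (σ⁻¹ * ι M * σ) ⟨x + y, hxy0⟩ = ⟨x + y, hxy0⟩)
      simpa [hc, Equiv.Perm.mul_apply] using this
    exact hMc (by rw [← hι M c]; exact congrArg Subtype.val h4)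
  -- build the linear equivalence from σ
  have hself : ∀ z : Fin 6 → ZMod 2, z + z = 0 :=
    fun z => funext fun i => (by decide : ∀ t : ZMod 2, t + t = 0) (z i)
  let f0 : (Fin 6 → ZMod 2) → (Fin 6 → ZMod 2) :=
    fun x => if hx : x = 0 then 0 else ((σ ⟨x, hx⟩ : {v : Fin 6 → ZMod 2 // v ≠ 0}) : Fin 6 → ZMod 2)
  let g0 : (Fin 6 → ZMod 2) → (Fin 6 → ZMod 2) :=
    fun x => if hx : x = 0 then 0 else ((σ⁻¹ ⟨x, hx⟩ : {v : Fin 6 → ZMod 2 // v ≠ 0}) : Fin 6 → ZMod 2)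
  have hmap_add : ∀ x y, f0 (x + y) = f0 x + f0 y := by
    intro x y
    by_cases hx : x = 0
    · subst hx; simp [f0]
    by_cases hy : y = 0
    · subst hy; simp [f0]
    by_cases hxy : x = y
    · subst hxy
      simp only [f0, hself x, dif_pos rfl, dif_neg hx]
      rw [hself]
    · have hxy0 : x + y ≠ 0 := by
        intro h
        apply hxy
        have h2 := congrArg (· + y) h
        simp only [zero_add] at h2
        rwa [add_assoc, hself y, add_zero] at h2
      simp only [f0, dif_neg hxy0, dif_neg hx, dif_neg hy]
      exact hadd x y hx hy hxy hxy0
  have hmap_smul : ∀ (c : ZMod 2) x, f0 (c • x) = c • f0 x := by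
    intro c x
    rcases (by decide : ∀ t : ZMod 2, t = 0 ∨ t = 1) c with rfl | rfl
    · simp [f0]
    · simp
  have hleft : ∀ x, g0 (f0 x) = x := by
    intro x
    by_cases hx : x = 0
    · subst hx; simp [f0, g0]
    · simp only [f0, g0, dif_neg hx, dif_neg (σ ⟨x, hx⟩).2]
      have : σ⁻¹ (σ ⟨x, hx⟩) = ⟨x, hx⟩ := σ.symm_apply_apply _
      rw [this]
  have hright : ∀ x, f0 (g0 x) = x := by
    intro x
    by_cases hx : x = 0
    · subst hx; simp [f0, g0]
    · simp only [f0, g0, dif_neg hx, dif_neg (σ⁻¹ ⟨x, hx⟩).2]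
      have : σ (σ⁻¹ ⟨x, hx⟩) = ⟨x, hx⟩ := σ.apply_symm_apply _
      rw [this]
  let e : (Fin 6 → ZMod 2) ≃ₗ[ZMod 2] (Fin 6 → ZMod 2) :=
    { toFun := f0
      map_add' := hmap_add
      map_smul' := hmap_smul
      invFun := g0
      left_inv := hleft
      right_inv := hright }
  obtain ⟨M, hM⟩ := exists_gl_of_linearEquiv e
  refine ⟨M, ?_⟩
  apply Equiv.ext
  intro z
  apply Subtype.ext
  rw [hι, hM]
  show f0 (z : Fin 6 → ZMod 2) = _
  simp only [f0, dif_neg z.2]
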